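/- arXiv:1603.08888 — 5 statements merged into one kernel-verified Lean document; each statement's English description precedes it below -/
import Mathlib

section
/- A vector field F : V^n → V^n is of the form F = Γ_f for some f : V^n → V if and only if F ∘ A_{σ_i} = A_{σ_i} ∘ F for all σ_i ∈ Σ. Moreover, in that case f = F_{σ_1}. -/
/-- The regular-representation maps `A_σ` on `V^n = (Σ → V)`. -/
def Amap {M : Type*} [Monoid M] {V : Type*} [AddCommGroup V] [Module ℝ V]
    (m : M) : (M → V) →ₗ[ℝ] (M → V) where
  toFun X := fun j => X (j * m)
  map_add' _ _ := rfl
  map_smul' _ _ := rfl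

/-- The fundamental network vector field `Γ_f`, defined componentwise by
`(Γ_f)_σ = f ∘ A_σ`. -/
def GammaF {M : Type*} [Monoid M] {V : Type*} [AddCommGroup V] [Module ℝ V]
    (f : (M → V) → V) : (M → V) → (M → V) :=
  fun X => fun m => f (Amap m X)

/-- `F = Γ_f` for some `f` iff `F` commutes with all `A_σ`;
moreover, in that case `f = F_{σ₁}`, i.e. `F = Γ_{F_{σ₁}}`. -/
theorem fundamental_iff_equivariant {M : Type*} [Monoid M] [Fintype M]
    {V : Type*} [AddCommGroup V] [Module ℝ V] (F : (M → V) → (M → V)) :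
    ((∃ f : (M → V) → V, F = GammaF f) ↔
      (∀ (m : M) (X : M → V), F (Amap m X) = Amap m (F X))) ∧
    ((∀ (m : M) (X : M → V), F (Amap m X) = Amap m (F X)) →
      F = GammaF (fun Y => F Y 1)) := by
  have key : (∀ (m : M) (X : M → V), F (Amap m X) = Amap m (F X)) →
      F = GammaF (fun Y => F Y 1) := by
    intro h
    funext X m
    simp only [GammaF]
    rw [h m X]
    simp [Amap]
  refine ⟨⟨?_, fun h => ⟨_, key h⟩⟩, key⟩
  rintro ⟨f, rfl⟩ m X
  funext n
  simp only [GammaF, Amap, LinearMap.coe_mk, AddHom.coe_mk]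
  congr 1
  funext j
  rw [mul_assoc]
end

section
/- If f : V^n × Ω → V is differentiable at 0, then the linearization of the augmented fundamental network vector field satisfies D Γ̲_f(0) x̲ = Γ̲_h(x̲) where h(x̲) := Df(0) x̲; i.e., the derivative at the origin of a fundamental network vector field is again a fundamental network vector field, with response function the derivative of f. -/
def GammaAug {M : Type*} [Monoid M] {l : ℕ} {V : Type*} [NormedAddCommGroup V]
    [NormedSpace ℝ V]
    (g : ((M → V) × (Fin l → ℝ)) → V) :
    ((M → V) × (Fin l → ℝ)) → ((M → V) × (Fin l → ℝ)) :=
  fun p => ((fun m => g ((fun j => p.1 (j * m)), p.2)), 0)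

section aux
variable {M : Type*} [Monoid M] [Fintype M] {l : ℕ}
    {V : Type*} [NormedAddCommGroup V] [NormedSpace ℝ V]

/-- A̲ₘ as a continuous linear map. -/
def Lmap (m : M) : ((M → V) × (Fin l → ℝ)) →L[ℝ] ((M → V) × (Fin l → ℝ)) :=
  ((ContinuousLinearMap.pi fun j =>
      (ContinuousLinearMap.proj (R := ℝ) (φ := fun _ : M => V) (j * m)).comp
        (ContinuousLinearMap.fst ℝ (M → V) (Fin l → ℝ)))).prod
    (ContinuousLinearMap.snd ℝ (M → V) (Fin l → ℝ))

omit [Fintype M] in @[simp] theorem Lmap_apply (m : M) (p : (M → V) × (Fin l → ℝ)) :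
    Lmap (l := l) m p = ((fun j => p.1 (j * m)), p.2) := rfl

theorem fderiv_GammaAug' (f : ((M → V) × (Fin l → ℝ)) → V)
    (hf : DifferentiableAt ℝ f 0) :
    ∀ x : (M → V) × (Fin l → ℝ),
      fderiv ℝ (GammaAug f) 0 x = GammaAug (fun y => fderiv ℝ f 0 y) x := by
  intro x
  have h1 : HasFDerivAt (GammaAug f)
      ((ContinuousLinearMap.pi fun m : M =>
          (fderiv ℝ f 0).comp (Lmap m)).prod 0) 0 := by
    apply HasFDerivAt.prodMk
    · apply hasFDerivAt_pi.2
      intro m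
      have h0 : Lmap (V := V) (l := l) m 0 = 0 := by ext <;> rfl
      have := HasFDerivAt.comp (0 : (M → V) × (Fin l → ℝ))
        (h0 ▸ hf.hasFDerivAt) ((Lmap (V := V) (l := l) m).hasFDerivAt)
      exact this
    · exact hasFDerivAt_const 0 0
  rw [h1.fderiv]
  rfl

end aux

/-- if `f` is differentiable at `0`, then
`DΓ̲_f(0) x̲ = Γ̲_h(x̲)` where `h = Df(0)`: the linearization at the origin of a
fundamental network vector field is again a fundamental network vector field,
with response function the derivative of `f`. -/
theorem fderiv_GammaAug {M : Type*} [Monoid M] [Fintype M] {l : ℕ}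
    {V : Type*} [NormedAddCommGroup V] [NormedSpace ℝ V]
    (f : ((M → V) × (Fin l → ℝ)) → V) (hf : DifferentiableAt ℝ f 0) :
    ∀ x : (M → V) × (Fin l → ℝ),
      fderiv ℝ (GammaAug f) 0 x = GammaAug (fun y => fderiv ℝ f 0 y) x :=
  fderiv_GammaAug' f hf
end

section
/- The vector field γ_f^A of network A commutes with the linear map S : (x_1,x_2,x_3) ↦ (x_2,x_3,x_3), and conversely every map F : V^3 → V^3 satisfying F ∘ S = S ∘ F equals γ_f^A for f(y_1,y_2,y_3) := F_1(y_1,y_2,y_3). -/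
/-- The admissible vector field of network A with response function `f`. -/
def gammaA {V : Type*} (f : V → V → V → V) : V × V × V → V × V × V :=
  fun x => (f x.1 x.2.1 x.2.2, f x.2.1 x.2.2 x.2.2, f x.2.2 x.2.2 x.2.2)

/-- The (linear) map `S(x₁,x₂,x₃) = (x₂,x₃,x₃)` on `V³`. -/
def Smap {V : Type*} : V × V × V → V × V × V :=
  fun x => (x.2.1, x.2.2, x.2.2)

/-- `γ_f^A` commutes with `S : (x₁,x₂,x₃) ↦ (x₂,x₃,x₃)`, and
conversely every `F : V³ → V³` with `F ∘ S = S ∘ F` equals `γ_f^A` for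
`f := F₁`. -/
theorem networkA_S_equivariance {V : Type*} [AddCommGroup V] [Module ℝ V] :
    (∀ f : V → V → V → V, (gammaA f) ∘ Smap = Smap ∘ (gammaA f)) ∧
    (∀ F : V × V × V → V × V × V, F ∘ Smap = Smap ∘ F →
      F = gammaA (fun a b c => (F (a, b, c)).1)) := by
  constructor
  · intro f; rfl
  · intro F h
    funext x
    obtain ⟨a, b, c⟩ := x
    have h1 := congrFun h (a, b, c)
    have h2 := congrFun h (b, c, c)
    simp only [Function.comp, Smap] at h1 h2
    have e2 : (F (a, b, c)).2.1 = (F (b, c, c)).1 := by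
      have := congrArg Prod.fst h1; simpa using this.symm
    have e3 : (F (a, b, c)).2.2 = (F (c, c, c)).1 := by
      have t1 : (F (b, c, c)).2.1 = (F (a, b, c)).2.2 := by
        have := congrArg (fun p => p.2.1) h1; simpa using this
      have t2 : (F (b, c, c)).2.1 = (F (c, c, c)).1 := by
        have := congrArg Prod.fst h2; simpa using this.symm
      rw [← t1, t2]
    show F (a, b, c) = _
    simp only [gammaA]
    exact Prod.ext rfl (Prod.ext e2 e3)
end

section
/- Under the identification X_1 = x_1, X_2 = X_3 = x_2, X_4 = x_3, the subspace {X_2 = X_3} ⊂ ℝ^4 is invariant under the fundamental network vector field Γ_f^{B̃} of network B̃, and the restriction of Γ_f^{B̃} to this subspace equals the admissible vector field γ_f^B of network B; i.e., the embedding ι(x_1,x_2,x_3) := (x_1,x_2,x_2,x_3) satisfies ι ∘ γ_f^B = Γ_f^{B̃} ∘ ι for every f : ℝ^4 → ℝ. -/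
/-- The fundamental network vector field of network B̃ on `ℝ⁴`. -/
def GammaB (f : ℝ → ℝ → ℝ → ℝ → ℝ) : ℝ × ℝ × ℝ × ℝ → ℝ × ℝ × ℝ × ℝ :=
  fun X => (f X.1 X.2.1 X.2.2.1 X.2.2.2,
            f X.2.1 X.2.2.2 X.2.2.1 X.2.2.2,
            f X.2.2.1 X.2.2.2 X.2.2.1 X.2.2.2,
            f X.2.2.2 X.2.2.2 X.2.2.1 X.2.2.2)

/-- The admissible vector field of network B on `ℝ³`. -/
def gammaB (f : ℝ → ℝ → ℝ → ℝ → ℝ) : ℝ × ℝ × ℝ → ℝ × ℝ × ℝ :=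
  fun x => (f x.1 x.2.1 x.2.1 x.2.2,
            f x.2.1 x.2.2 x.2.1 x.2.2,
            f x.2.2 x.2.2 x.2.1 x.2.2)

/-- The embedding `ι(x₁,x₂,x₃) = (x₁,x₂,x₂,x₃)` realizing network B as the
synchrony space `{X₂ = X₃}` of its fundamental network B̃. -/
def iotaB : ℝ × ℝ × ℝ → ℝ × ℝ × ℝ × ℝ :=
  fun x => (x.1, x.2.1, x.2.1, x.2.2)

/-- the subspace `{X₂ = X₃} ⊂ ℝ⁴` is invariant under the
fundamental network vector field `Γ_f^{B̃}`, and the restriction of `Γ_f^{B̃}`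
to it is the admissible vector field `γ_f^B` of network B:
`ι ∘ γ_f^B = Γ_f^{B̃} ∘ ι` for every `f`. -/
theorem networkB_quotient (f : ℝ → ℝ → ℝ → ℝ → ℝ) :
    (∀ X : ℝ × ℝ × ℝ × ℝ, X.2.1 = X.2.2.1 →
      (GammaB f X).2.1 = (GammaB f X).2.2.1) ∧
    (iotaB ∘ gammaB f = GammaB f ∘ iotaB) := by
  constructor
  · intro X h
    simp [GammaB, h]
  · funext x
    simp [iotaB, gammaB, GammaB]
end

section
/- The fundamental network vector field of network B̃ commutes with the two noninvertible linear maps T_1 : (X_1,X_2,X_3,X_4) ↦ (X_2,X_4,X_3,X_4) and T_2 : (X_1,X_2,X_3,X_4) ↦ (X_3,X_4,X_3,X_4); conversely, every F : ℝ^4 → ℝ^4 commuting with both T_1 and T_2 equals Γ_f^{B̃} for f = F_1. -/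
/-- The noninvertible linear map `T₁(X₁,X₂,X₃,X₄) = (X₂,X₄,X₃,X₄)`. -/
def T1 : ℝ × ℝ × ℝ × ℝ → ℝ × ℝ × ℝ × ℝ :=
  fun X => (X.2.1, X.2.2.2, X.2.2.1, X.2.2.2)

/-- The noninvertible linear map `T₂(X₁,X₂,X₃,X₄) = (X₃,X₄,X₃,X₄)`. -/
def T2 : ℝ × ℝ × ℝ × ℝ → ℝ × ℝ × ℝ × ℝ :=
  fun X => (X.2.2.1, X.2.2.2, X.2.2.1, X.2.2.2)

/-- `Γ_f^{B̃}` commutes with `T₁` and `T₂`; conversely every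
`F : ℝ⁴ → ℝ⁴` commuting with both `T₁` and `T₂` equals `Γ_f^{B̃}` for
`f = F₁`. -/
theorem networkBtilde_equivariance :
    (∀ f : ℝ → ℝ → ℝ → ℝ → ℝ,
      (GammaB f) ∘ T1 = T1 ∘ (GammaB f) ∧ (GammaB f) ∘ T2 = T2 ∘ (GammaB f)) ∧
    (∀ F : ℝ × ℝ × ℝ × ℝ → ℝ × ℝ × ℝ × ℝ,
      F ∘ T1 = T1 ∘ F → F ∘ T2 = T2 ∘ F →
      F = GammaB (fun a b c d => (F (a, b, c, d)).1)) := by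
  constructor
  · intro f
    constructor <;> funext X <;> rfl
  · intro F h1 h2
    funext X
    obtain ⟨a, b, c, d⟩ := X
    have e1 := congrFun h1 (a, b, c, d)
    have e2 := congrFun h2 (a, b, c, d)
    have e3 := congrFun h1 (c, d, c, d)
    simp only [Function.comp, T1, T2, GammaB] at e1 e2 e3 ⊢
    have p2 : (F (b, d, c, d)).1 = (F (a, b, c, d)).2.1 := congrArg Prod.fst e1
    have p3 : (F (c, d, c, d)).1 = (F (a, b, c, d)).2.2.1 := congrArg Prod.fst e2
    have p4 : (F (d, d, c, d)).1 = (F (a, b, c, d)).2.2.2 := by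
      have q1 : (F (d, d, c, d)).1 = (F (c, d, c, d)).2.1 := congrArg Prod.fst e3
      have q2 : (F (c, d, c, d)).2.1 = (F (a, b, c, d)).2.2.2 :=
        congrArg (fun X => X.2.1) e2
      rw [q1, q2]
    exact Prod.ext rfl (Prod.ext p2.symm (Prod.ext p3.symm p4.symm))
end
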